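/- Let S ≥ 1 and let N, D ≥ 1 be coprime natural numbers. Then in ℤ[X] the product (1 − X^{SN})·(1 − X^{SD}) divides (1 − X)·(1 − X^{SND})^S. (Equivalently, the Alexander polynomial expression (1−t)(1−t^{SND})^S/((1−t^{SN})(1−t^{SD})) of the (−SN, SD)-torus link is a polynomial.) -/

import Mathlib

open Polynomial

private lemma dvd_X_pow_mod_sub_one {R : Type*} [CommRing R] (g : R[X]) (m n : ℕ)
    (hm : g ∣ X ^ m - 1) (hn : g ∣ X ^ n - 1) : g ∣ X ^ (n % m) - 1 := by
  have key : (X : R[X]) ^ (n % m) - 1 =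
      (X ^ n - 1) - X ^ (n % m) * ((X ^ m) ^ (n / m) - 1) := by
    have hX : (X : R[X]) ^ n = X ^ (n % m) * (X ^ m) ^ (n / m) := by
      rw [← pow_mul, ← pow_add, Nat.mod_add_div]
    rw [hX]; ring
  rw [key]
  have h2 : g ∣ (X ^ m) ^ (n / m) - 1 := by
    have := sub_dvd_pow_sub_pow ((X : R[X]) ^ m) 1 (n / m)
    simp only [one_pow] at this
    exact hm.trans this
  exact dvd_sub hn (h2.mul_left _)

private lemma dvd_X_pow_gcd_sub_one {R : Type*} [CommRing R] (g : R[X]) (m n : ℕ)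
    (hm : g ∣ X ^ m - 1) (hn : g ∣ X ^ n - 1) : g ∣ X ^ (Nat.gcd m n) - 1 := by
  induction m, n using Nat.gcd.induction with
  | H0 n => simpa using hn
  | H1 m n hpos ih =>
    rw [Nat.gcd_rec]
    exact ih (dvd_X_pow_mod_sub_one g m n hm hn) hm

private lemma rat_dvd (N D : ℕ) (hND : Nat.Coprime N D) :
    ((X : ℚ[X]) ^ N - 1) * ((X : ℚ[X]) ^ D - 1) ∣
      ((X : ℚ[X]) - 1) * ((X : ℚ[X]) ^ (N * D) - 1) := by
  set a : ℚ[X] := X ^ N - 1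
  set b : ℚ[X] := X ^ D - 1
  have hg : gcd a b ∣ (X : ℚ[X]) - 1 := by
    have := dvd_X_pow_gcd_sub_one (gcd a b) N D (gcd_dvd_left a b) (gcd_dvd_right a b)
    rwa [hND, pow_one] at this
  have hl : lcm a b ∣ (X : ℚ[X]) ^ (N * D) - 1 := by
    refine lcm_dvd ?_ ?_
    · have := sub_dvd_pow_sub_pow ((X : ℚ[X]) ^ N) 1 D
      simpa [a, ← pow_mul] using this
    · have := sub_dvd_pow_sub_pow ((X : ℚ[X]) ^ D) 1 N
      rw [Nat.mul_comm N D]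
      simpa [b, ← pow_mul] using this
  exact ((gcd_mul_lcm a b).symm.dvd).trans (mul_dvd_mul hg hl)

private lemma int_dvd (N D : ℕ) (hN : 1 ≤ N) (hD : 1 ≤ D) (hND : Nat.Coprime N D) :
    ((X : ℤ[X]) ^ N - 1) * ((X : ℤ[X]) ^ D - 1) ∣
      ((X : ℤ[X]) - 1) * ((X : ℤ[X]) ^ (N * D) - 1) := by
  have hp : (((X : ℤ[X]) ^ N - 1) * ((X : ℤ[X]) ^ D - 1)).IsPrimitive := by
    refine Polynomial.Monic.isPrimitive (Polynomial.Monic.mul ?_ ?_) <;>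
      · rw [show (1 : ℤ[X]) = C 1 by simp]
        exact monic_X_pow_sub_C 1 (by omega)
  have hq : (((X : ℤ[X]) - 1) * ((X : ℤ[X]) ^ (N * D) - 1)).IsPrimitive := by
    refine Polynomial.Monic.isPrimitive (Polynomial.Monic.mul ?_ ?_)
    · simpa using monic_X_sub_C (1 : ℤ)
    · rw [show (1 : ℤ[X]) = C 1 by simp]
      exact monic_X_pow_sub_C 1 (by positivity)
  rw [Polynomial.IsPrimitive.Int.dvd_iff_map_cast_dvd_map_cast _ _ hp]
  simpa [Polynomial.map_mul, Polynomial.map_sub, Polynomial.map_pow] using rat_dvd N D hND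

open Polynomial in
theorem alexander_poly_is_polynomial (S N D : ℕ) (hS : 1 ≤ S) (hN : 1 ≤ N) (hD : 1 ≤ D)
    (hND : Nat.Coprime N D) :
    ((1 - (X : ℤ[X]) ^ (S * N)) * (1 - (X : ℤ[X]) ^ (S * D))) ∣
      ((1 - (X : ℤ[X])) * (1 - (X : ℤ[X]) ^ (S * N * D)) ^ S) := by
  -- step 1: compose int_dvd with X^S
  have h1 : ((X : ℤ[X]) ^ (S * N) - 1) * ((X : ℤ[X]) ^ (S * D) - 1) ∣
      ((X : ℤ[X]) ^ S - 1) * ((X : ℤ[X]) ^ (S * N * D) - 1) := by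
    obtain ⟨c, hc⟩ := int_dvd N D hN hD hND
    refine ⟨c.comp (X ^ S), ?_⟩
    have := congrArg (fun p => p.comp ((X : ℤ[X]) ^ S)) hc
    simpa [mul_comp, sub_comp, X_pow_comp, one_comp, ← pow_mul, mul_comm,
      mul_assoc, mul_left_comm] using this
  -- step 2
  have h2 : ((X : ℤ[X]) ^ S - 1) * ((X : ℤ[X]) ^ (S * N * D) - 1) ∣
      ((X : ℤ[X]) - 1) * ((X : ℤ[X]) ^ (S * N * D) - 1) ^ S := by
    have hgeom : (∑ i ∈ Finset.range S, (X : ℤ[X]) ^ i) * (X - 1) = X ^ S - 1 :=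
      geom_sum_mul X S
    have hsum : (∑ i ∈ Finset.range S, (X : ℤ[X]) ^ i) ∣
        ((X : ℤ[X]) ^ (S * N * D) - 1) ^ (S - 1) := by
      rcases Nat.lt_or_ge S 2 with h | h
      · interval_cases S
        simp
      · have hd1 : (∑ i ∈ Finset.range S, (X : ℤ[X]) ^ i) ∣ (X : ℤ[X]) ^ S - 1 :=
          ⟨X - 1, hgeom.symm⟩
        have hd2 : ((X : ℤ[X]) ^ S - 1) ∣ (X : ℤ[X]) ^ (S * N * D) - 1 := by
          have := sub_dvd_pow_sub_pow ((X : ℤ[X]) ^ S) 1 (N * D)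
          simpa [← pow_mul, mul_assoc] using this
        exact (hd1.trans hd2).trans (dvd_pow_self _ (by omega))
    have hSsplit : ((X : ℤ[X]) ^ (S * N * D) - 1) ^ S =
        ((X : ℤ[X]) ^ (S * N * D) - 1) ^ (S - 1) * ((X : ℤ[X]) ^ (S * N * D) - 1) := by
      rw [← pow_succ]
      congr 1
      omega
    rw [hSsplit, ← hgeom]
    obtain ⟨c, hc⟩ := hsum
    exact ⟨c, by rw [hc]; ring⟩
  have h3 := h1.trans h2
  -- step 3: fix signs
  obtain ⟨c, hc⟩ := h3
  refine ⟨(-1) ^ (S + 1) * c, ?_⟩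
  have hpow : (1 - (X : ℤ[X]) ^ (S * N * D)) ^ S =
      (-1) ^ S * ((X : ℤ[X]) ^ (S * N * D) - 1) ^ S := by
    rw [← mul_pow]
    congr 1
    ring
  rw [hpow]
  have : (1 - (X : ℤ[X])) * ((-1) ^ S * ((X : ℤ[X]) ^ (S * N * D) - 1) ^ S) =
      (-1) ^ (S + 1) * (((X : ℤ[X]) - 1) * ((X : ℤ[X]) ^ (S * N * D) - 1) ^ S) := by
    ring
  rw [this, hc]
  ring
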